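/- Let n = 2m² for a positive integer m. Then the equi-n-square S obtained from the paired m×m box construction has no transversal of size greater than n − m/2; equivalently, every transversal of S omits at least m/2 = √n/(2√2) symbols. -/
import Mathlib

/-- The box of side length `m` containing a cell (0-indexed). -/
def boxOf (m : ℕ) (p : ℕ × ℕ) : ℕ × ℕ := (p.1 / m, p.2 / m)

/-- Two boxes (0-indexed) are paired: diagonal boxes `A_{2k,2k}` and `A_{2k+1,2k+1}`,
and off-diagonal boxes `A_{i,j}` and `A_{j,i}` (`i ≠ j`). -/
def boxPaired (b b' : ℕ × ℕ) : Prop :=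
  (b.1 = b.2 ∧ b'.1 = b'.2 ∧ b.1 / 2 = b'.1 / 2) ∨
  (b.1 ≠ b.2 ∧ (b' = b ∨ b' = (b.2, b.1)))

/-- A transversal: a set of cells sharing no row, column or symbol. -/
def IsTransversal {n : ℕ} (S : Fin n × Fin n → Fin n) (T : Finset (Fin n × Fin n)) : Prop :=
  ∀ p ∈ T, ∀ q ∈ T, p ≠ q → p.1 ≠ q.1 ∧ p.2 ≠ q.2 ∧ S p ≠ S q

/-- cells of `T` in box `b` -/
def BxT {n : ℕ} (m : ℕ) (T : Finset (Fin n × Fin n)) (b : ℕ × ℕ) : Finset (Fin n × Fin n) :=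
  T.filter fun p => ((p.1 : ℕ) / m, (p.2 : ℕ) / m) = b

/-- cells of `T` in row band `i` -/
def RwT {n : ℕ} (m : ℕ) (T : Finset (Fin n × Fin n)) (i : ℕ) : Finset (Fin n × Fin n) :=
  T.filter fun p => (p.1 : ℕ) / m = i

/-- cells of `T` in column band `j` -/
def ClT {n : ℕ} (m : ℕ) (T : Finset (Fin n × Fin n)) (j : ℕ) : Finset (Fin n × Fin n) :=
  T.filter fun p => (p.2 : ℕ) / m = j

lemma sum_pair_le (M : ℕ) (f : ℕ → ℕ) (h : ∀ k, f (2 * k) + f (2 * k + 1) ≤ 1) :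
    ∑ i ∈ Finset.range (2 * M), f i ≤ M := by
  induction M with
  | zero => simp
  | succ M ih =>
      have h2 : 2 * (M + 1) = (2 * M + 1) + 1 := by ring
      rw [h2, Finset.sum_range_succ, Finset.sum_range_succ]
      have := h M
      omega

theorem stmt3 (m : ℕ) (hm : 1 ≤ m)
    (S : Fin (2 * m ^ 2) × Fin (2 * m ^ 2) → Fin (2 * m ^ 2))
    (hS : ∀ p q : Fin (2 * m ^ 2) × Fin (2 * m ^ 2),
      S p = S q ↔ boxPaired (boxOf m ((p.1 : ℕ), (p.2 : ℕ))) (boxOf m ((q.1 : ℕ), (q.2 : ℕ))))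
    (hequi : ∀ c : Fin (2 * m ^ 2),
      (Finset.univ.filter (fun p : Fin (2 * m ^ 2) × Fin (2 * m ^ 2) => S p = c)).card
        = 2 * m ^ 2) :
    ∀ T : Finset (Fin (2 * m ^ 2) × Fin (2 * m ^ 2)), IsTransversal S T →
      2 * T.card + m ≤ 2 * (2 * m ^ 2) := by
  intro T hT
  have hm0 : 0 < m := hm
  -- cells land in bands 0..2m-1
  have hband1 : ∀ p : Fin (2 * m ^ 2) × Fin (2 * m ^ 2), (p.1 : ℕ) / m < 2 * m := by
    intro p
    rw [Nat.div_lt_iff_lt_mul hm0]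
    have := p.1.isLt
    nlinarith
  have hband2 : ∀ p : Fin (2 * m ^ 2) × Fin (2 * m ^ 2), (p.2 : ℕ) / m < 2 * m := by
    intro p
    rw [Nat.div_lt_iff_lt_mul hm0]
    have := p.2.isLt
    nlinarith
  -- two cells of T in paired boxes must coincide
  have hpair : ∀ p ∈ T, ∀ q ∈ T,
      boxPaired ((p.1 : ℕ) / m, (p.2 : ℕ) / m) ((q.1 : ℕ) / m, (q.2 : ℕ) / m) → p = q := by
    intro p hp q hq hbp
    by_contra hne
    exact (hT p hp q hq hne).2.2 ((hS p q).2 hbp)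
  -- two paired (distinct) boxes contain at most one cell of T in total
  have hTwo : ∀ b b' : ℕ × ℕ, b ≠ b' →
      boxPaired b b → boxPaired b b' → boxPaired b' b → boxPaired b' b' →
      (BxT m T b).card + (BxT m T b').card ≤ 1 := by
    intro b b' hbb h1 h2 h3 h4
    have hdisj : Disjoint (BxT m T b) (BxT m T b') := by
      rw [Finset.disjoint_left]
      intro p hp hp'
      simp only [BxT, Finset.mem_filter] at hp hp'
      exact hbb (hp.2 ▸ hp'.2)
    rw [← Finset.card_union_of_disjoint hdisj]
    rw [Finset.card_le_one]
    intro p hp q hq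
    simp only [BxT, Finset.mem_union, Finset.mem_filter] at hp hq
    rcases hp with ⟨hpT, hpb⟩ | ⟨hpT, hpb⟩ <;> rcases hq with ⟨hqT, hqb⟩ | ⟨hqT, hqb⟩ <;>
      [ (exact hpair p hpT q hqT (by rw [hpb, hqb]; exact h1));
        (exact hpair p hpT q hqT (by rw [hpb, hqb]; exact h2));
        (exact hpair p hpT q hqT (by rw [hpb, hqb]; exact h3));
        (exact hpair p hpT q hqT (by rw [hpb, hqb]; exact h4)) ]
  -- row band bound
  have hRow : ∀ i, (RwT m T i).card ≤ m := by
    intro i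
    have : (RwT m T i).card ≤ (Finset.range m).card := by
      apply Finset.card_le_card_of_injOn (fun p => (p.1 : ℕ) % m)
      · intro p _
        exact Finset.mem_range.2 (Nat.mod_lt _ hm0)
      · intro p hp q hq hmod
        simp only [RwT, Finset.coe_filter, Set.mem_setOf_eq] at hp hq
        have hmod' : (p.1 : ℕ) % m = (q.1 : ℕ) % m := hmod
        have hv : (p.1 : ℕ) = (q.1 : ℕ) := by
          conv_lhs => rw [← Nat.div_add_mod (p.1 : ℕ) m]
          conv_rhs => rw [← Nat.div_add_mod (q.1 : ℕ) m]
          rw [hp.2, hq.2, hmod']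
        by_contra hne
        exact (hT p hp.1 q hq.1 hne).1 (Fin.ext hv)
    simpa using this
  have hCol : ∀ j, (ClT m T j).card ≤ m := by
    intro j
    have : (ClT m T j).card ≤ (Finset.range m).card := by
      apply Finset.card_le_card_of_injOn (fun p => (p.2 : ℕ) % m)
      · intro p _
        exact Finset.mem_range.2 (Nat.mod_lt _ hm0)
      · intro p hp q hq hmod
        simp only [ClT, Finset.coe_filter, Set.mem_setOf_eq] at hp hq
        have hmod' : (p.2 : ℕ) % m = (q.2 : ℕ) % m := hmod
        have hv : (p.2 : ℕ) = (q.2 : ℕ) := by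
          conv_lhs => rw [← Nat.div_add_mod (p.2 : ℕ) m]
          conv_rhs => rw [← Nat.div_add_mod (q.2 : ℕ) m]
          rw [hp.2, hq.2, hmod']
        by_contra hne
        exact (hT p hp.1 q hq.1 hne).2.1 (Fin.ext hv)
    simpa using this
  -- off-diagonal paired boxes
  have hOff : ∀ i j : ℕ, i ≠ j → (BxT m T (i, j)).card + (BxT m T (j, i)).card ≤ 1 := by
    intro i j hij
    apply hTwo
    · simp [Prod.ext_iff]; intro h; exact absurd h hij
    · exact Or.inr ⟨hij, Or.inl rfl⟩
    · exact Or.inr ⟨hij, Or.inr rfl⟩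
    · exact Or.inr ⟨Ne.symm hij, Or.inr rfl⟩
    · exact Or.inr ⟨Ne.symm hij, Or.inl rfl⟩
  -- diagonal box pairs
  have hDiagPair : ∀ k : ℕ,
      (BxT m T (2 * k, 2 * k)).card + (BxT m T (2 * k + 1, 2 * k + 1)).card ≤ 1 := by
    intro k
    apply hTwo
    · simp [Prod.ext_iff]
    · exact Or.inl ⟨rfl, rfl, rfl⟩
    · exact Or.inl ⟨rfl, rfl, by omega⟩
    · exact Or.inl ⟨rfl, rfl, by omega⟩
    · exact Or.inl ⟨rfl, rfl, rfl⟩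
  -- fiberwise decompositions
  have hRsum : T.card = ∑ i ∈ Finset.range (2 * m), (RwT m T i).card := by
    simp only [RwT]
    apply Finset.card_eq_sum_card_fiberwise (f := fun p : Fin (2 * m ^ 2) × Fin (2 * m ^ 2) => (p.1 : ℕ) / m)
    intro p _
    exact Finset.mem_range.2 (hband1 p)
  have hCsum : T.card = ∑ j ∈ Finset.range (2 * m), (ClT m T j).card := by
    simp only [ClT]
    apply Finset.card_eq_sum_card_fiberwise (f := fun p : Fin (2 * m ^ 2) × Fin (2 * m ^ 2) => (p.2 : ℕ) / m)
    intro p _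
    exact Finset.mem_range.2 (hband2 p)
  have hRdec : ∀ i, (RwT m T i).card = ∑ j ∈ Finset.range (2 * m), (BxT m T (i, j)).card := by
    intro i
    have h0 : (RwT m T i).card =
        ∑ j ∈ Finset.range (2 * m), ((RwT m T i).filter (fun p => (p.2 : ℕ) / m = j)).card := by
      apply Finset.card_eq_sum_card_fiberwise (f := fun p : Fin (2 * m ^ 2) × Fin (2 * m ^ 2) => (p.2 : ℕ) / m)
      intro p _
      exact Finset.mem_range.2 (hband2 p)
    rw [h0]
    apply Finset.sum_congr rfl
    intro j _
    congr 1
    ext p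
    simp only [RwT, BxT, Finset.mem_filter, Finset.filter_filter, Prod.ext_iff]
    all_goals tauto
  have hCdec : ∀ j, (ClT m T j).card = ∑ i ∈ Finset.range (2 * m), (BxT m T (i, j)).card := by
    intro j
    have h0 : (ClT m T j).card =
        ∑ i ∈ Finset.range (2 * m), ((ClT m T j).filter (fun p => (p.1 : ℕ) / m = i)).card := by
      apply Finset.card_eq_sum_card_fiberwise (f := fun p : Fin (2 * m ^ 2) × Fin (2 * m ^ 2) => (p.1 : ℕ) / m)
      intro p _
      exact Finset.mem_range.2 (hband1 p)
    rw [h0]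
    apply Finset.sum_congr rfl
    intro i _
    congr 1
    ext p
    simp only [ClT, BxT, Finset.mem_filter, Finset.filter_filter, Prod.ext_iff]
    all_goals tauto
  -- key per-band bound
  have hKey : ∀ i ∈ Finset.range (2 * m),
      (RwT m T i).card + (ClT m T i).card + 1 ≤ 2 * m + (BxT m T (i, i)).card := by
    intro i hi
    rcases Nat.eq_zero_or_pos (BxT m T (i, i)).card with h0 | h1
    · -- diagonal box empty: row+col band count ≤ 2m-1
      rw [hRdec, hCdec, ← Finset.sum_add_distrib]
      have hsplit : ∑ j ∈ Finset.range (2 * m),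
          ((BxT m T (i, j)).card + (BxT m T (j, i)).card) =
          ∑ j ∈ (Finset.range (2 * m)).erase i,
          ((BxT m T (i, j)).card + (BxT m T (j, i)).card) +
          ((BxT m T (i, i)).card + (BxT m T (i, i)).card) := by
        rw [Finset.sum_erase_add _ _ hi]
      rw [hsplit, h0]
      have hb : ∑ j ∈ (Finset.range (2 * m)).erase i,
          ((BxT m T (i, j)).card + (BxT m T (j, i)).card) ≤
          ∑ _j ∈ (Finset.range (2 * m)).erase i, 1 := by
        apply Finset.sum_le_sum
        intro j hj
        exact hOff i j (Ne.symm (Finset.ne_of_mem_erase hj))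
      have hcard : ((Finset.range (2 * m)).erase i).card = 2 * m - 1 := by
        rw [Finset.card_erase_of_mem hi, Finset.card_range]
      rw [Finset.sum_const, hcard, smul_eq_mul, mul_one] at hb
      omega
    · have := hRow i
      have := hCol i
      omega
  -- diagonal total ≤ m
  have hDiag : ∑ i ∈ Finset.range (2 * m), (BxT m T (i, i)).card ≤ m :=
    sum_pair_le m (fun i => (BxT m T (i, i)).card) hDiagPair
  -- assemble
  have hsum : ∑ i ∈ Finset.range (2 * m),
      ((RwT m T i).card + (ClT m T i).card + 1) ≤
      ∑ i ∈ Finset.range (2 * m), (2 * m + (BxT m T (i, i)).card) :=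
    Finset.sum_le_sum hKey
  simp only [Finset.sum_add_distrib, Finset.sum_const, Finset.card_range, smul_eq_mul,
    mul_one] at hsum
  rw [← hRsum, ← hCsum] at hsum
  nlinarith [hDiag, hsum]
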